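/- The commutator of ∂₁ with the Laplace–Beltrami operator satisfies [∂₁, D_α] = Σ_{i≥1} (i+1)·pᵢ·∂_{i+1} (the operator E₂^⊥) as R-linear operators on A. -/

import Mathlib

/- R = ℚ[α], A = R[p₁,p₂,…].  [∂₁, D_α] = Σ_{i≥1} (i+1)·pᵢ·∂_{i+1} = E₂^⊥. -/

open MvPolynomial

noncomputable section

abbrev R : Type := Polynomial ℚ
abbrev A : Type := MvPolynomial ℕ+ R

/-- the variable α of R = ℚ[α] -/
def α : R := Polynomial.X

/-- the power-sum generator pᵢ (i ≥ 1) -/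
def p (i : ℕ+) : A := X i

/-- the partial derivative ∂/∂pᵢ -/
def d (i : ℕ+) (f : A) : A := pderiv i f

/-- the Laplace–Beltrami operator D_α -/
def Dal (f : A) : A :=
    (Polynomial.C (1/2 : ℚ) * (α - 1)) •
      (∑ᶠ i : ℕ+, (((i : ℕ) : R) * (((i : ℕ) : R) - 1)) • (p i * d i f))
  + (Polynomial.C (1/2 : ℚ) * α) •
      (∑ᶠ i : ℕ+, ∑ᶠ j : ℕ+, (((i : ℕ) : R) * ((j : ℕ) : R)) • (p (i + j) * d i (d j f)))
  + Polynomial.C (1/2 : ℚ) •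
      (∑ᶠ i : ℕ+, ∑ᶠ j : ℕ+, (((i : ℕ) : R) + ((j : ℕ) : R)) • (p i * p j * d (i + j) f))

/-- partial derivatives commute -/
theorem pderiv_comm' {σ : Type*} [DecidableEq σ] {S : Type*} [CommSemiring S] (i j : σ)
    (f : MvPolynomial σ S) : pderiv i (pderiv j f) = pderiv j (pderiv i f) := by
  induction f using MvPolynomial.induction_on' with
  | add p q hp hq => simp [hp, hq]
  | monomial s a =>
    simp only [pderiv_monomial]
    by_cases h : i = j
    · subst h; rfl
    · rw [tsub_right_comm]
      congr 1
      rw [Finsupp.tsub_apply, Finsupp.tsub_apply, Finsupp.single_eq_of_ne h,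
        Finsupp.single_eq_of_ne (Ne.symm h)]
      simp [mul_right_comm]

lemma dd_comm (i j : ℕ+) (f : A) : d i (d j f) = d j (d i f) := pderiv_comm' i j f

def Sv (f : A) : Set ℕ+ := {i | d i f ≠ 0}

lemma Sv_fin (f : A) : (Sv f).Finite :=
  f.vars.finite_toSet.subset fun i hi => by
    by_contra h
    exact hi (pderiv_eq_zero_of_notMem_vars h)

def Tv (f : A) : Set ℕ+ := ⋃ k ∈ Sv f, Set.Iic k

lemma Tv_fin (f : A) : (Tv f).Finite := (Sv_fin f).biUnion fun k _ => Set.finite_Iic k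

lemma mem_Tv {f : A} {i k : ℕ+} (h : d k f ≠ 0) (hik : i ≤ k) : i ∈ Tv f :=
  Set.mem_biUnion h hik

/-- ∂₁ as an additive monoid hom -/
def D1 : A →+ A := AddMonoidHom.mk' (d 1) (fun a b => by simp [d])

lemma d1_finsum {g : ℕ+ → A} (h : (Function.support g).Finite) :
    d 1 (∑ᶠ i, g i) = ∑ᶠ i, d 1 (g i) := D1.map_finsum h

lemma d1_smul (c : R) (x : A) : d 1 (c • x) = c • d 1 x := by
  simp [d]

lemma pnat_le_add_left (i j : ℕ+) : j ≤ i + j := by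
  rw [← PNat.coe_le_coe]; push_cast; omega

lemma pnat_le_add_right (i j : ℕ+) : i ≤ i + j := by
  rw [← PNat.coe_le_coe]; push_cast; omega

lemma add_ne_one (i j : ℕ+) : i + j ≠ 1 := by
  intro h
  have h2 : ((i : ℕ) + (j : ℕ)) = 1 := by exact_mod_cast congrArg (fun x : ℕ+ => (x : ℕ)) h
  have := i.pos; have := j.pos; omega

def S1 (f : A) : A := ∑ᶠ i : ℕ+, (((i : ℕ) : R) * (((i : ℕ) : R) - 1)) • (p i * d i f)
def S2 (f : A) : A :=
  ∑ᶠ i : ℕ+, ∑ᶠ j : ℕ+, (((i : ℕ) : R) * ((j : ℕ) : R)) • (p (i + j) * d i (d j f))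
def S3 (f : A) : A :=
  ∑ᶠ i : ℕ+, ∑ᶠ j : ℕ+, (((i : ℕ) : R) + ((j : ℕ) : R)) • (p i * p j * d (i + j) f)
def E2 (f : A) : A := ∑ᶠ i : ℕ+, (((i : ℕ) : R) + 1) • (p i * d (i + 1) f)

lemma Dal_eq (f : A) : Dal f =
    (Polynomial.C (1/2 : ℚ) * (α - 1)) • S1 f + (Polynomial.C (1/2 : ℚ) * α) • S2 f
      + Polynomial.C (1/2 : ℚ) • S3 f := rfl

lemma step1 (f : A) : d 1 (S1 f) = S1 (d 1 f) := by
  rw [S1, d1_finsum ?hf]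
  case hf =>
    refine (Sv_fin f).subset ?_
    intro i hi
    simp only [Function.mem_support] at hi
    simp only [Sv, Set.mem_setOf_eq]
    intro h0
    exact hi (by rw [h0, mul_zero, smul_zero])
  refine finsum_congr fun i => ?_
  by_cases hi : i = 1
  · subst hi
    norm_num [d]
  · have key : d 1 (p i * d i f) = p i * d i (d 1 f) := by
      unfold d p
      rw [pderiv_mul, pderiv_X_of_ne hi, pderiv_comm']
      ring
    rw [d1_smul, key]

lemma step2 (f : A) : d 1 (S2 f) = S2 (d 1 f) := by
  rw [S2, d1_finsum ?hf]
  case hf =>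
    refine (Sv_fin f).subset ?_
    intro i hi
    simp only [Function.mem_support] at hi
    simp only [Sv, Set.mem_setOf_eq]
    intro h0
    refine hi (finsum_eq_zero_of_forall_eq_zero fun j => ?_)
    rw [dd_comm, h0]
    simp [d]
  refine finsum_congr fun i => ?_
  rw [d1_finsum ?hg]
  case hg =>
    refine (Sv_fin f).subset ?_
    intro j hj
    simp only [Function.mem_support] at hj
    simp only [Sv, Set.mem_setOf_eq]
    intro h0
    refine hj ?_
    rw [h0]
    simp [d]
  refine finsum_congr fun j => ?_
  rw [d1_smul]
  congr 1
  unfold d p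
  rw [pderiv_mul, pderiv_X_of_ne (add_ne_one i j), pderiv_comm' 1 i, pderiv_comm' 1 j]
  ring

lemma step3 (f : A) : d 1 (S3 f) = S3 (d 1 f) + (E2 f + E2 f) := by
  classical
  set c : ℕ+ → ℕ+ → R := fun i j => ((i : ℕ) : R) + ((j : ℕ) : R) with hc
  set A1 : ℕ+ → ℕ+ → A := fun i j => c i j • ((pderiv 1 (X i : A) * X j) * d (i + j) f) with hA1
  set A2 : ℕ+ → ℕ+ → A := fun i j => c i j • ((X i * pderiv 1 (X j : A)) * d (i + j) f) with hA2
  set B : ℕ+ → ℕ+ → A := fun i j => c i j • (p i * p j * d (i + j) (d 1 f)) with hB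
  have hterm : ∀ i j, d 1 (c i j • (p i * p j * d (i + j) f)) = A1 i j + A2 i j + B i j := by
    intro i j
    have key : d 1 (p i * p j * d (i + j) f) =
        (pderiv 1 (X i : A) * X j) * d (i + j) f + (X i * pderiv 1 (X j : A)) * d (i + j) f
          + p i * p j * d (i + j) (d 1 f) := by
      unfold d p
      rw [pderiv_mul, pderiv_mul, pderiv_comm' 1]
      ring
    rw [d1_smul, key, smul_add, smul_add]
  -- support helpers
  have hsA1 : ∀ i, (Function.support (A1 i)).Finite := by
    intro i
    refine (Tv_fin f).subset fun j hj => ?_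
    simp only [Function.mem_support] at hj
    by_contra h0
    refine hj ?_
    have : d (i + j) f = 0 := by
      by_contra h1
      exact h0 (mem_Tv h1 (pnat_le_add_left i j))
    rw [hA1]; simp only; rw [this, mul_zero, smul_zero]
  have hsA2 : ∀ i, (Function.support (A2 i)).Finite := by
    intro i
    refine (Tv_fin f).subset fun j hj => ?_
    simp only [Function.mem_support] at hj
    by_contra h0
    refine hj ?_
    have : d (i + j) f = 0 := by
      by_contra h1
      exact h0 (mem_Tv h1 (pnat_le_add_left i j))
    rw [hA2]; simp only; rw [this, mul_zero, smul_zero]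
  have hsB : ∀ i, (Function.support (B i)).Finite := by
    intro i
    refine (Tv_fin (d 1 f)).subset fun j hj => ?_
    simp only [Function.mem_support] at hj
    by_contra h0
    refine hj ?_
    have : d (i + j) (d 1 f) = 0 := by
      by_contra h1
      exact h0 (mem_Tv h1 (pnat_le_add_left i j))
    rw [hB]; simp only; rw [this, mul_zero, smul_zero]
  have houter : (Function.support fun i => ∑ᶠ j, c i j • (p i * p j * d (i + j) f)).Finite := by
    refine (Tv_fin f).subset fun i hi => ?_
    simp only [Function.mem_support] at hi
    by_contra h0
    refine hi (finsum_eq_zero_of_forall_eq_zero fun j => ?_)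
    have : d (i + j) f = 0 := by
      by_contra h1
      exact h0 (mem_Tv h1 (pnat_le_add_right i j))
    rw [this, mul_zero, smul_zero]
  have hinner : ∀ i, (Function.support fun j => c i j • (p i * p j * d (i + j) f)).Finite := by
    intro i
    refine (Tv_fin f).subset fun j hj => ?_
    simp only [Function.mem_support] at hj
    by_contra h0
    refine hj ?_
    have : d (i + j) f = 0 := by
      by_contra h1
      exact h0 (mem_Tv h1 (pnat_le_add_left i j))
    rw [this, mul_zero, smul_zero]
  rw [S3, d1_finsum houter]
  have hmid : ∀ i, d 1 (∑ᶠ j, c i j • (p i * p j * d (i + j) f)) =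
      ∑ᶠ j, A1 i j + (∑ᶠ j, A2 i j + ∑ᶠ j, B i j) := by
    intro i
    rw [d1_finsum (hinner i)]
    calc (∑ᶠ j, d 1 (c i j • (p i * p j * d (i + j) f)))
        = ∑ᶠ j, (A1 i j + (A2 i j + B i j)) := finsum_congr fun j => by rw [hterm, add_assoc]
      _ = ∑ᶠ j, A1 i j + ∑ᶠ j, (A2 i j + B i j) :=
          finsum_add_distrib (hsA1 i) (((hsA2 i).union (hsB i)).subset
            (Function.support_add _ _))
      _ = ∑ᶠ j, A1 i j + (∑ᶠ j, A2 i j + ∑ᶠ j, B i j) := by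
          rw [finsum_add_distrib (hsA2 i) (hsB i)]
  rw [finsum_congr hmid]
  have hso1 : (Function.support fun i => ∑ᶠ j, A1 i j).Finite := by
    refine (Set.finite_singleton (1 : ℕ+)).subset fun i hi => ?_
    simp only [Function.mem_support] at hi
    by_contra h0
    have h1 : i ≠ 1 := by simpa using h0
    refine hi (finsum_eq_zero_of_forall_eq_zero fun j => ?_)
    rw [hA1]; simp only; rw [pderiv_X_of_ne h1, zero_mul, zero_mul, smul_zero]
  have hso2 : (Function.support fun i => ∑ᶠ j, A2 i j).Finite := by
    refine (Tv_fin f).subset fun i hi => ?_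
    simp only [Function.mem_support] at hi
    by_contra h0
    refine hi (finsum_eq_zero_of_forall_eq_zero fun j => ?_)
    have : d (i + j) f = 0 := by
      by_contra h1
      exact h0 (mem_Tv h1 (pnat_le_add_right i j))
    rw [hA2]; simp only; rw [this, mul_zero, smul_zero]
  have hso3 : (Function.support fun i => ∑ᶠ j, B i j).Finite := by
    refine (Tv_fin (d 1 f)).subset fun i hi => ?_
    simp only [Function.mem_support] at hi
    by_contra h0
    refine hi (finsum_eq_zero_of_forall_eq_zero fun j => ?_)
    have : d (i + j) (d 1 f) = 0 := by
      by_contra h1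
      exact h0 (mem_Tv h1 (pnat_le_add_right i j))
    rw [hB]; simp only; rw [this, mul_zero, smul_zero]
  rw [finsum_add_distrib hso1 ((hso2.union hso3).subset (Function.support_add _ _)),
    finsum_add_distrib hso2 hso3]
  have e1 : (∑ᶠ i, ∑ᶠ j, A1 i j) = E2 f := by
    rw [finsum_eq_single _ (1 : ℕ+) ?_]
    · rw [E2]
      refine finsum_congr fun j => ?_
      rw [hA1]
      simp only [pderiv_X_self, one_mul]
      rw [hc]
      simp only [PNat.one_coe, Nat.cast_one]
      rw [add_comm (1 : R), add_comm (1 : ℕ+)]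
      rfl
    · intro i hi
      refine finsum_eq_zero_of_forall_eq_zero fun j => ?_
      rw [hA1]; simp only; rw [pderiv_X_of_ne hi, zero_mul, zero_mul, smul_zero]
  have e2 : (∑ᶠ i, ∑ᶠ j, A2 i j) = E2 f := by
    rw [E2]
    refine finsum_congr fun i => ?_
    rw [finsum_eq_single _ (1 : ℕ+) ?_]
    · rw [hA2]
      simp only [pderiv_X_self, mul_one]
      rw [hc]
      simp only [PNat.one_coe, Nat.cast_one]
      rfl
    · intro j hj
      rw [hA2]; simp only; rw [pderiv_X_of_ne hj, mul_zero, zero_mul, smul_zero]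
  have e3 : (∑ᶠ i, ∑ᶠ j, B i j) = S3 (d 1 f) := rfl
  rw [e1, e2, e3]
  abel

theorem commutator_d1_Dal (f : A) :
    d 1 (Dal f) - Dal (d 1 f)
      = ∑ᶠ i : ℕ+, (((i : ℕ) : R) + 1) • (p i * d (i + 1) f) := by
  have expand : d 1 (Dal f) =
      (Polynomial.C (1/2 : ℚ) * (α - 1)) • d 1 (S1 f)
        + (Polynomial.C (1/2 : ℚ) * α) • d 1 (S2 f)
        + Polynomial.C (1/2 : ℚ) • d 1 (S3 f) := by
    rw [Dal_eq]
    simp only [d, map_add, Derivation.map_smul]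
  have half : Polynomial.C (1/2 : ℚ) • (E2 f + E2 f) = E2 f := by
    rw [smul_add, ← add_smul, ← Polynomial.C_add]
    norm_num
  rw [expand, step1, step2, step3, Dal_eq (d 1 f), smul_add, half]
  have : (∑ᶠ i : ℕ+, (((i : ℕ) : R) + 1) • (p i * d (i + 1) f)) = E2 f := rfl
  rw [this]
  abel
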